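/- Let V be a Hilbert space with inner product a(·,·) and induced norm, V' its dual. For functionals R_0,…,R_q ∈ V', let z_j ∈ V solve a(z_j, v) = ⟨R_j, v⟩ for all v ∈ V. Then with z_* := ∑_j z_j φ_j for an L²(I)-orthonormal family {φ_j}, and R(v) := ∑_j ∫_I ⟨R_j, v(t)⟩ φ_j(t) dt for v ∈ L²(I;V): (∑_{j=0}^q ‖R_j‖²_{V'})^{1/2} ≤ sup_{v ∈ P_q(I;V), v≠0} R(v) / (∫_I a(v(t),v(t)) dt)^{1/2}, where P_q(I;V) is the space of V-valued polynomials of degree ≤ q on I. -/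

import Mathlib

open MeasureTheory

section Aux

variable {V : Type*} [NormedAddCommGroup V] [InnerProductSpace ℝ V]

/-- Integrating `⟨x, ∑ tⁱ • cᵢ⟩ f t` gives `⟨x, ∑ (∫ tⁱ f) • cᵢ⟩`. -/
lemma aux_key (a b : ℝ) (n : ℕ) (f : ℝ → ℝ) (hf : Continuous f)
    (c : Fin n → V) (x : V) :
    (∫ t in a..b, (inner ℝ x (∑ i : Fin n, t ^ (i : ℕ) • c i) : ℝ) * f t)
      = (inner ℝ x (∑ i : Fin n, (∫ t in a..b, t ^ (i : ℕ) * f t) • c i) : ℝ) := by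
  have h1 : ∀ t : ℝ, (inner ℝ x (∑ i : Fin n, t ^ (i : ℕ) • c i) : ℝ) * f t
      = ∑ i : Fin n, (t ^ (i : ℕ) * f t) * (inner ℝ x (c i) : ℝ) := by
    intro t
    rw [inner_sum, Finset.sum_mul]
    refine Finset.sum_congr rfl fun i _ => ?_
    rw [real_inner_smul_right]; ring
  simp only [h1]
  rw [intervalIntegral.integral_finset_sum]
  · rw [inner_sum]
    refine Finset.sum_congr rfl fun i _ => ?_
    rw [intervalIntegral.integral_mul_const, real_inner_smul_right]
  · intro i _
    exact (((continuous_pow (i : ℕ)).mul hf).mul continuous_const).intervalIntegrable a b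

/-- Parseval for finite orthonormal family. -/
lemma aux_ortho (a b : ℝ) (n : ℕ) (φ : Fin n → ℝ → ℝ) (hφc : ∀ j, Continuous (φ j))
    (horth : ∀ i j, (∫ t in a..b, φ i t * φ j t) = if i = j then 1 else 0)
    (y : Fin n → V) :
    (∫ t in a..b, ‖∑ j, φ j t • y j‖ ^ 2) = ∑ j, ‖y j‖ ^ 2 := by
  have hpt : ∀ t : ℝ, ‖∑ j, φ j t • y j‖ ^ 2
      = ∑ j, ∑ k, (φ j t * φ k t) * (inner ℝ (y j) (y k) : ℝ) := by
    intro t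
    rw [← real_inner_self_eq_norm_sq, sum_inner]
    refine Finset.sum_congr rfl fun j _ => ?_
    rw [real_inner_smul_left, inner_sum, Finset.mul_sum]
    refine Finset.sum_congr rfl fun k _ => ?_
    rw [real_inner_smul_right]; ring
  simp only [hpt]
  rw [intervalIntegral.integral_finset_sum]
  · refine Finset.sum_congr rfl fun j _ => ?_
    rw [intervalIntegral.integral_finset_sum]
    · have h2 : ∀ k : Fin n, (∫ t in a..b, (φ j t * φ k t) * (inner ℝ (y j) (y k) : ℝ))
          = (if j = k then 1 else 0) * (inner ℝ (y j) (y k) : ℝ) := by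
        intro k
        rw [intervalIntegral.integral_mul_const, horth j k]
      simp only [h2, ite_mul, one_mul, zero_mul, Finset.sum_ite_eq, Finset.mem_univ,
        if_true, real_inner_self_eq_norm_sq]
    · intro k _
      exact (((hφc j).mul (hφc k)).mul continuous_const).intervalIntegrable a b
  · intro j _
    exact (continuous_finset_sum _ fun k _ =>
      ((hφc j).mul (hφc k)).mul continuous_const).intervalIntegrable a b

end Aux

/-- Inequality (8.6), abstracted: let `V` be a Hilbert space (inner ℝ product `a(·,·)`),
`R_0,…,R_q ∈ V'`, and `z_j ∈ V` their Riesz representatives (`a(z_j,v) = ⟨R_j,v⟩`).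
Let `{φ_j}` be an `L²(I)`-orthonormal family of polynomials of degree ≤ q and set
`R(v) = ∑_j ∫_I ⟨R_j, v(t)⟩ φ_j(t) dt`. Then
`(∑_j ‖R_j‖²_{V'})^{1/2} ≤ sup_{v ∈ P_q(I;V)\{0}} R(v)/(∫_I a(v,v) dt)^{1/2}`. -/
theorem stmt_17 {V : Type*} [NormedAddCommGroup V] [InnerProductSpace ℝ V] [CompleteSpace V]
    (q : ℕ) (a b : ℝ) (hab : a < b)
    (φ : Fin (q + 1) → ℝ → ℝ)
    (hφpoly : ∀ j, ∃ p : Polynomial ℝ, p.natDegree ≤ q ∧ ∀ t : ℝ, φ j t = p.eval t)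
    (horth : ∀ i j, (∫ t in a..b, φ i t * φ j t) = if i = j then 1 else 0)
    (R : Fin (q + 1) → StrongDual ℝ V)
    (z : Fin (q + 1) → V) (hz : ∀ j, ∀ v : V, (inner ℝ (z j) v : ℝ) = R j v) :
    Real.sqrt (∑ j, ‖R j‖ ^ 2) ≤
      sSup {r : ℝ | ∃ v : ℝ → V,
        (∃ c : Fin (q + 1) → V, ∀ t : ℝ, v t = ∑ i : Fin (q + 1), t ^ (i : ℕ) • c i) ∧
        (∫ t in a..b, ‖v t‖ ^ 2) ≠ 0 ∧
        r = (∑ j, ∫ t in a..b, (R j (v t)) * φ j t) /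
              Real.sqrt (∫ t in a..b, ‖v t‖ ^ 2)} := by
  classical
  set T : Set ℝ := {r : ℝ | ∃ v : ℝ → V,
        (∃ c : Fin (q + 1) → V, ∀ t : ℝ, v t = ∑ i : Fin (q + 1), t ^ (i : ℕ) • c i) ∧
        (∫ t in a..b, ‖v t‖ ^ 2) ≠ 0 ∧
        r = (∑ j, ∫ t in a..b, (R j (v t)) * φ j t) /
              Real.sqrt (∫ t in a..b, ‖v t‖ ^ 2)} with hT
  -- continuity of φ
  have hφc : ∀ j, Continuous (φ j) := by
    intro j
    obtain ⟨p, _, hp⟩ := hφpoly j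
    have : φ j = fun t => p.eval t := funext hp
    rw [this]
    exact p.continuous
  -- ‖R j‖ = ‖z j‖
  have hRz : ∀ j, ‖R j‖ = ‖z j‖ := by
    intro j
    have hRe : R j = (InnerProductSpace.toDual ℝ V) (z j) := by
      ext v
      rw [InnerProductSpace.toDual_apply_apply]
      exact (hz j v).symm
    rw [hRe, LinearIsometryEquiv.norm_map]
  set S : ℝ := ∑ j, ‖z j‖ ^ 2 with hSdef
  have hS0 : 0 ≤ S := Finset.sum_nonneg fun j _ => sq_nonneg _
  have hLHS : Real.sqrt (∑ j, ‖R j‖ ^ 2) = Real.sqrt S := by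
    congr 1
    exact Finset.sum_congr rfl fun j _ => by rw [hRz j]
  rw [hLHS]
  -- every element of T is ≤ √S
  have hbound : ∀ r ∈ T, r ≤ Real.sqrt S := by
    rintro r ⟨v, ⟨c, hvc⟩, hne, hr⟩
    have hvcont : Continuous v := by
      have : v = fun t => ∑ i : Fin (q + 1), t ^ (i : ℕ) • c i := funext hvc
      rw [this]
      exact continuous_finset_sum _ fun i _ => (continuous_pow _).smul continuous_const
    set w : Fin (q + 1) → V := fun j => ∑ i : Fin (q + 1),
      (∫ t in a..b, t ^ (i : ℕ) * φ j t) • c i with hwdef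
    set D : ℝ := ∫ t in a..b, ‖v t‖ ^ 2 with hDdef
    have hD0 : 0 ≤ D := intervalIntegral.integral_nonneg hab.le fun t _ => sq_nonneg _
    have hDpos : 0 < D := lt_of_le_of_ne hD0 (Ne.symm hne)
    -- numerator computation
    have hnum : (∑ j, ∫ t in a..b, (R j (v t)) * φ j t)
        = ∑ j, (inner ℝ (z j) (w j) : ℝ) := by
      refine Finset.sum_congr rfl fun j _ => ?_
      have h1 : ∀ t : ℝ, (R j (v t)) * φ j t
          = (inner ℝ (z j) (∑ i : Fin (q + 1), t ^ (i : ℕ) • c i) : ℝ) * φ j t := by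
        intro t
        rw [← hz j, hvc t]
      simp only [h1]
      exact aux_key a b (q + 1) (φ j) (hφc j) c (z j)
    -- Bessel: ∑ ‖w j‖² ≤ D
    have hbessel : (∑ j, ‖w j‖ ^ 2) ≤ D := by
      set s : ℝ → V := fun t => ∑ j, φ j t • w j with hsdef
      have hscont : Continuous s :=
        continuous_finset_sum _ fun j _ => (hφc j).smul continuous_const
      have h_vs : (∫ t in a..b, (inner ℝ (v t) (s t) : ℝ)) = ∑ j, ‖w j‖ ^ 2 := by
        have h1 : ∀ t : ℝ, (inner ℝ (v t) (s t) : ℝ)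
            = ∑ j, (inner ℝ (w j) (v t) : ℝ) * φ j t := by
          intro t
          simp only [hsdef, inner_sum, real_inner_smul_right]
          refine Finset.sum_congr rfl fun j _ => ?_
          rw [real_inner_comm]; ring
        simp only [h1]
        rw [intervalIntegral.integral_finset_sum]
        · refine Finset.sum_congr rfl fun j _ => ?_
          have h2 : ∀ t : ℝ, (inner ℝ (w j) (v t) : ℝ) * φ j t
              = (inner ℝ (w j) (∑ i : Fin (q + 1), t ^ (i : ℕ) • c i) : ℝ) * φ j t := by
            intro t; rw [hvc t]
          simp only [h2]
          rw [aux_key a b (q + 1) (φ j) (hφc j) c (w j)]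
          have hww : (∑ i : Fin (q + 1), (∫ t in a..b, t ^ (i : ℕ) * φ j t) • c i) = w j :=
            rfl
          rw [hww, real_inner_self_eq_norm_sq]
        · intro j _
          exact ((Continuous.inner continuous_const hvcont).mul (hφc j)).intervalIntegrable a b
      have h_ss : (∫ t in a..b, ‖s t‖ ^ 2) = ∑ j, ‖w j‖ ^ 2 :=
        aux_ortho a b (q + 1) φ hφc horth w
      have h0 : 0 ≤ ∫ t in a..b, ‖v t - s t‖ ^ 2 :=
        intervalIntegral.integral_nonneg hab.le fun t _ => sq_nonneg _
      have hexp : ∀ t : ℝ, ‖v t - s t‖ ^ 2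
          = ‖v t‖ ^ 2 - 2 * (inner ℝ (v t) (s t) : ℝ) + ‖s t‖ ^ 2 :=
        fun t => norm_sub_sq_real (v t) (s t)
      have iv : IntervalIntegrable (fun t => ‖v t‖ ^ 2) volume a b :=
        ((hvcont.norm).pow 2).intervalIntegrable a b
      have ivs : IntervalIntegrable (fun t => 2 * (inner ℝ (v t) (s t) : ℝ)) volume a b :=
        (continuous_const.mul (Continuous.inner hvcont hscont)).intervalIntegrable a b
      have is : IntervalIntegrable (fun t => ‖s t‖ ^ 2) volume a b :=
        ((hscont.norm).pow 2).intervalIntegrable a b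
      have hsplit : (∫ t in a..b, ‖v t - s t‖ ^ 2)
          = (∫ t in a..b, ‖v t‖ ^ 2) - 2 * (∫ t in a..b, (inner ℝ (v t) (s t) : ℝ))
            + (∫ t in a..b, ‖s t‖ ^ 2) := by
        simp only [hexp]
        rw [intervalIntegral.integral_add (iv.sub ivs) is,
          intervalIntegral.integral_sub iv ivs, intervalIntegral.integral_const_mul]
      rw [hsplit, h_vs, h_ss] at h0
      rw [hDdef]
      linarith
  -- Cauchy–Schwarz
    have hCS : (∑ j, (inner ℝ (z j) (w j) : ℝ))
        ≤ Real.sqrt S * Real.sqrt (∑ j, ‖w j‖ ^ 2) := by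
      have h1 : (∑ j, (inner ℝ (z j) (w j) : ℝ)) ≤ ∑ j, ‖z j‖ * ‖w j‖ :=
        Finset.sum_le_sum fun j _ => real_inner_le_norm (z j) (w j)
      have h2 : (∑ j, ‖z j‖ * ‖w j‖) ^ 2 ≤ S * ∑ j, ‖w j‖ ^ 2 :=
        Finset.sum_mul_sq_le_sq_mul_sq Finset.univ (fun j => ‖z j‖) (fun j => ‖w j‖)
      have h3 : (∑ j, ‖z j‖ * ‖w j‖) ≤ Real.sqrt (S * ∑ j, ‖w j‖ ^ 2) :=
        (Real.le_sqrt (Finset.sum_nonneg fun j _ =>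
            mul_nonneg (norm_nonneg _) (norm_nonneg _))
          (mul_nonneg hS0 (Finset.sum_nonneg fun j _ => sq_nonneg _))).mpr h2
      rw [Real.sqrt_mul hS0] at h3
      exact h1.trans h3
    have hwD : Real.sqrt (∑ j, ‖w j‖ ^ 2) ≤ Real.sqrt D := Real.sqrt_le_sqrt hbessel
    rw [hr, hnum, div_le_iff₀ (Real.sqrt_pos.mpr hDpos)]
    calc (∑ j, (inner ℝ (z j) (w j) : ℝ))
        ≤ Real.sqrt S * Real.sqrt (∑ j, ‖w j‖ ^ 2) := hCS
      _ ≤ Real.sqrt S * Real.sqrt D :=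
          mul_le_mul_of_nonneg_left hwD (Real.sqrt_nonneg _)
  by_cases hScase : S = 0
  · -- degenerate case: all residuals vanish
    rw [hScase, Real.sqrt_zero]
    have hz0 : ∀ j, z j = 0 := by
      intro j
      have h := (Finset.sum_eq_zero_iff_of_nonneg
        (fun j _ => sq_nonneg ‖z j‖)).mp hScase j (Finset.mem_univ j)
      have : ‖z j‖ = 0 := by
        have := sq_eq_zero_iff.mp h
        exact this
      exact norm_eq_zero.mp this
    have hR0 : ∀ j (x : V), R j x = 0 := by
      intro j x
      rw [← hz j, hz0 j, inner_zero_left]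
    have hT0 : ∀ r ∈ T, r = 0 := by
      rintro r ⟨v, _, _, hr⟩
      rw [hr]
      simp only [hR0, zero_mul, intervalIntegral.integral_zero, Finset.sum_const_zero,
        zero_div]
    rcases T.eq_empty_or_nonempty with h | ⟨r, hrT⟩
    · rw [h, Real.sSup_empty]
    · have hr0 := hT0 r hrT
      have : (0 : ℝ) ≤ sSup T := by
        rw [← hr0]
        exact le_csSup ⟨0, fun x hx => le_of_eq (hT0 x hx)⟩ hrT
      exact this
  · -- main case: take v = z_* = ∑ φ_j • z_j
    obtain ⟨p, hp⟩ := Classical.axiomOfChoice hφpoly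
    have hdeg : ∀ j, (p j).natDegree < q + 1 :=
      fun j => Nat.lt_succ_of_le (hp j).1
    have heval : ∀ j t, φ j t = (p j).eval t := fun j => (hp j).2
    set vstar : ℝ → V := fun t => ∑ j, φ j t • z j with hvstar
    have hDstar : (∫ t in a..b, ‖vstar t‖ ^ 2) = S :=
      aux_ortho a b (q + 1) φ hφc horth z
    have hcoef : ∀ t : ℝ, vstar t
        = ∑ i : Fin (q + 1), t ^ (i : ℕ) • ∑ j, ((p j).coeff (i : ℕ)) • z j := by
      intro t
      calc vstar t
          = ∑ j, (∑ i : Fin (q + 1), ((p j).coeff (i : ℕ) * t ^ (i : ℕ))) • z j := by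
            refine Finset.sum_congr rfl fun j _ => ?_
            congr 1
            rw [heval j t, Polynomial.eval_eq_sum_range' (hdeg j),
              ← Fin.sum_univ_eq_sum_range (fun i => (p j).coeff i * t ^ i)]
        _ = ∑ j, ∑ i : Fin (q + 1), ((p j).coeff (i : ℕ) * t ^ (i : ℕ)) • z j := by
            refine Finset.sum_congr rfl fun j _ => ?_
            rw [Finset.sum_smul]
        _ = ∑ i : Fin (q + 1), ∑ j, ((p j).coeff (i : ℕ) * t ^ (i : ℕ)) • z j :=
            Finset.sum_comm
        _ = ∑ i : Fin (q + 1), t ^ (i : ℕ) • ∑ j, ((p j).coeff (i : ℕ)) • z j := by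
            refine Finset.sum_congr rfl fun i _ => ?_
            rw [Finset.smul_sum]
            refine Finset.sum_congr rfl fun j _ => ?_
            rw [smul_smul, mul_comm]
    have hnumstar : (∑ j, ∫ t in a..b, (R j (vstar t)) * φ j t) = S := by
      refine Finset.sum_congr rfl fun j _ => ?_
      have h1 : ∀ t : ℝ, (R j (vstar t)) * φ j t
          = ∑ k, (φ k t * φ j t) * (inner ℝ (z j) (z k) : ℝ) := by
        intro t
        rw [← hz j, hvstar]
        simp only [inner_sum, real_inner_smul_right, Finset.sum_mul]
        refine Finset.sum_congr rfl fun k _ => ?_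
        ring
      simp only [h1]
      rw [intervalIntegral.integral_finset_sum]
      · have h2 : ∀ k : Fin (q + 1),
            (∫ t in a..b, (φ k t * φ j t) * (inner ℝ (z j) (z k) : ℝ))
              = (if k = j then 1 else 0) * (inner ℝ (z j) (z k) : ℝ) := by
          intro k
          rw [intervalIntegral.integral_mul_const, horth k j]
        simp only [h2, ite_mul, one_mul, zero_mul, Finset.sum_ite_eq', Finset.mem_univ,
          if_true, real_inner_self_eq_norm_sq]
      · intro k _
        exact (((hφc k).mul (hφc j)).mul continuous_const).intervalIntegrable a b
    have hmem : Real.sqrt S ∈ T := by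
      refine ⟨vstar, ⟨fun i => ∑ j, ((p j).coeff (i : ℕ)) • z j, hcoef⟩, ?_, ?_⟩
      · rw [hDstar]; exact hScase
      · rw [hnumstar, hDstar, Real.div_sqrt]
    exact le_csSup ⟨Real.sqrt S, fun x hx => hbound x hx⟩ hmem
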